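/- Let (X,d) be a discrete metric space of bounded geometry with naive property A, and let Y ⊆ X be a non-empty subspace equipped with the restricted metric. Then Y has naive property A. -/

import Mathlib

set_option linter.unusedSectionVars false
set_option maxHeartbeats 1000000

open Finset Metric

section Sel
variable {β : Type*} [DecidableEq β] [LinearOrder β]

noncomputable def sel (s : Finset β) (k : ℕ) : Finset β :=
  ((s.sort (· ≤ ·)).take k).toFinset

lemma sel_nodup_aux (s : Finset β) (k : ℕ) : ((s.sort (· ≤ ·)).take k).Nodup :=
  (Finset.sort_nodup s (· ≤ ·)).sublist (List.take_sublist _ _)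

lemma sel_card (s : Finset β) (k : ℕ) : (sel s k).card = min k s.card := by
  rw [sel, List.card_toFinset, (sel_nodup_aux s k).dedup, List.length_take,
    Finset.length_sort]

lemma sel_subset (s : Finset β) (k : ℕ) : sel s k ⊆ s := by
  intro x hx
  rw [sel, List.mem_toFinset] at hx
  have := List.take_subset k _ hx
  rwa [Finset.mem_sort] at this

lemma sel_mono (s : Finset β) {k m : ℕ} (h : k ≤ m) : sel s k ⊆ sel s m := by
  intro x hx
  rw [sel, List.mem_toFinset] at hx ⊢
  have heq : (s.sort (· ≤ ·)).take k = ((s.sort (· ≤ ·)).take m).take k := by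
    rw [List.take_take, min_eq_left h]
  rw [heq] at hx
  exact List.take_subset _ _ hx

lemma sel_zero (s : Finset β) : sel s 0 = ∅ := by
  simp [sel]

lemma card_sel_sdiff_sel (s : Finset β) (a b : ℕ) :
    (sel s a \ sel s b).card ≤ a - b := by
  rcases le_or_gt a b with h | h
  · rw [(Finset.sdiff_eq_empty_iff_subset).2 (sel_mono s h)]
    simp
  · rw [Finset.card_sdiff_of_subset (sel_mono s h.le), sel_card, sel_card]
    omega
end Sel

section symmdiff
variable {β : Type*} [DecidableEq β]

lemma card_symmDiff_finset (s t : Finset β) :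
    (symmDiff s t).card = (s \ t).card + (t \ s).card := by
  rw [symmDiff_def, Finset.sup_eq_union,
    Finset.card_union_of_disjoint disjoint_sdiff_sdiff]
end symmdiff

section Greedy
variable {β : Type*} [DecidableEq β] [LinearOrder β]

lemma exists_towers (r : β → β → Prop) (wf : WellFounded r)
    (trich : ∀ a b : β, a ≠ b → r a b ∨ r b a)
    (pool nbr : β → Finset β)
    (hsym : ∀ p q : β, q ∈ nbr p → p ∈ nbr q)
    (hself : ∀ p : β, p ∈ nbr p)
    (H n : ℕ) (hnbr : ∀ p, (nbr p).card ≤ n + 1) :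
    ∃ g : β → Finset β,
      (∀ p, g p ⊆ pool p) ∧ (∀ p, (g p).card ≤ H) ∧
      (∀ p q, p ≠ q → q ∈ nbr p → Disjoint (g p) (g q)) ∧
      (∀ p, n * H + H ≤ (pool p).card → (g p).card = H) := by
  classical
  set F : ∀ p : β, (∀ q : β, r q p → Finset β) → Finset β :=
    fun p rec => sel (pool p \
      (((nbr p).filter (fun q => q ≠ p)).attach.biUnion
        (fun q => if h : r q.1 p then rec q.1 h else ∅))) H with hF
  set g : β → Finset β := wf.fix F with hgdef
  have hg_eq : ∀ p, g p = F p (fun q _ => g q) := fun p => wf.fix_eq F p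
  set forb : β → Finset β := fun p =>
    ((nbr p).filter (fun q => q ≠ p)).attach.biUnion
      (fun q => if h : r q.1 p then g q.1 else ∅) with hforb
  have hg_eq' : ∀ p, g p = sel (pool p \ forb p) H := by
    intro p
    rw [hg_eq p, hF]
  have hsub : ∀ p, g p ⊆ pool p := by
    intro p
    rw [hg_eq' p]
    exact (sel_subset _ _).trans (Finset.sdiff_subset)
  have hcard_le : ∀ p, (g p).card ≤ H := by
    intro p
    rw [hg_eq' p, sel_card]
    exact min_le_left _ _
  refine ⟨g, hsub, hcard_le, ?_, ?_⟩
  · have key : ∀ p q, q ≠ p → q ∈ nbr p → r q p → Disjoint (g p) (g q) := by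
      intro p q hne hmem hr
      have hq_forb : g q ⊆ forb p := by
        rw [hforb]
        intro x hx
        refine Finset.mem_biUnion.2 ⟨⟨q, Finset.mem_filter.2 ⟨hmem, hne⟩⟩,
          Finset.mem_attach _ _, ?_⟩
        rw [dif_pos hr]
        exact hx
      have hp_sdiff : g p ⊆ pool p \ forb p := by
        rw [hg_eq' p]; exact sel_subset _ _
      exact Finset.disjoint_left.2 fun x hxp hxq =>
        (Finset.mem_sdiff.1 (hp_sdiff hxp)).2 (hq_forb hxq)
    intro p q hne hmem
    rcases trich q p (fun h => hne h.symm) with hr | hr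
    · exact key p q (fun h => hne h.symm) hmem hr
    · exact (key q p hne (hsym p q hmem) hr).symm
  · intro p hpool
    have hforb_card : (forb p).card ≤ n * H := by
      rw [hforb]
      calc (((nbr p).filter (fun q => q ≠ p)).attach.biUnion
            (fun q => if h : r q.1 p then g q.1 else ∅)).card
          ≤ ∑ q ∈ ((nbr p).filter (fun q => q ≠ p)).attach,
              (if h : r q.1 p then g q.1 else ∅).card := Finset.card_biUnion_le
        _ ≤ ((nbr p).filter (fun q => q ≠ p)).attach.card • H := by
            apply Finset.sum_le_card_nsmul
            intro q _
            split
            · exact hcard_le _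
            · simp
        _ ≤ n * H := by
            rw [smul_eq_mul, Finset.card_attach]
            have h1 : ((nbr p).filter (fun q => q ≠ p)) ⊆ (nbr p).erase p := by
              intro x hx
              rw [Finset.mem_erase]
              exact ⟨(Finset.mem_filter.1 hx).2, (Finset.mem_filter.1 hx).1⟩
            have h2 := Finset.card_le_card h1
            rw [Finset.card_erase_of_mem (hself p)] at h2
            have h3 := hnbr p
            exact Nat.mul_le_mul_right H (by omega)
    have hbig : H ≤ (pool p \ forb p).card := by
      have := Finset.le_card_sdiff (forb p) (pool p)
      omega
    rw [hg_eq' p, sel_card]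
    omega
end Greedy

/-- A metric space is (uniformly) discrete if the distances between distinct points
are bounded below by a positive constant. -/
def UniformlyDiscrete (X : Type*) [MetricSpace X] : Prop :=
  ∃ c : ℝ, 0 < c ∧ ∀ x y : X, x ≠ y → c ≤ dist x y

/-- A metric space has bounded geometry if for every `R > 0` the closed balls of radius `R`
are finite, of uniformly bounded cardinality. -/
def BoundedGeometry (X : Type*) [MetricSpace X] : Prop :=
  ∀ R : ℝ, 0 < R → ∃ N : ℕ, ∀ x : X,
    (Metric.closedBall x R).Finite ∧ (Metric.closedBall x R).ncard ≤ N

/-- Naive property A. -/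
def HasNaivePropertyA (X : Type*) [MetricSpace X] [DecidableEq X] : Prop :=
  ∀ R : ℝ, 0 < R → ∀ ε : ℝ, 0 < ε →
    ∃ (A : X → Finset X) (S : ℝ), 0 < S ∧
      (∀ x : X, (A x).Nonempty) ∧
      (∀ x y : X, dist x y ≤ R →
        ((symmDiff (A x) (A y)).card : ℝ) < ε * ((A x ∩ A y).card : ℝ)) ∧
      (∀ x : X, ∀ y ∈ A x, dist x y ≤ S)

/-- Naive property A passes to non-empty subspaces (with the restricted metric). -/
theorem naivePropertyA_subspace (X : Type*) [MetricSpace X] [DecidableEq X]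
    (hdisc : UniformlyDiscrete X) (hbg : BoundedGeometry X)
    (hA : HasNaivePropertyA X) (Y : Set X) (hY : Y.Nonempty) :
    HasNaivePropertyA Y := by
  classical
  intro R hR ε hε
  obtain ⟨A, S, hS, hAne, hApair, hArad⟩ := hA R hR ε hε
  obtain ⟨y₀, hy₀⟩ := hY
  -- nearest point projection onto Y
  have hproj : ∀ a : X, ∃ p : Y, ∀ q : Y, dist a (p : X) ≤ dist a (q : X) := by
    intro a
    obtain ⟨N₁, hN₁⟩ := hbg (dist a y₀ + 1) (by positivity)
    have hfin : {q : Y | dist a (q : X) ≤ dist a y₀}.Finite := by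
      have hsub : {q : Y | dist a (q : X) ≤ dist a y₀} ⊆
          ((↑) : Y → X) ⁻¹' (Metric.closedBall a (dist a y₀ + 1)) := by
        intro q hq
        simp only [Set.mem_preimage, Metric.mem_closedBall]
        rw [dist_comm]
        exact le_trans hq (by linarith)
      exact ((Set.Finite.preimage (Subtype.val_injective.injOn) (hN₁ a).1).subset hsub)
    have hne : ({q : Y | dist a (q : X) ≤ dist a y₀}).Nonempty :=
      ⟨⟨y₀, hy₀⟩, by simp [Set.mem_setOf_eq]⟩
    obtain ⟨p, hp, hmin⟩ := Finset.exists_min_image hfin.toFinset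
      (fun q => dist a (q : X)) ⟨hne.choose, hfin.mem_toFinset.2 hne.choose_spec⟩
    refine ⟨p, fun q => ?_⟩
    by_cases hq : dist a (q : X) ≤ dist a y₀
    · exact hmin q (hfin.mem_toFinset.2 hq)
    · push_neg at hq
      exact le_trans (hfin.mem_toFinset.1 hp) hq.le
  choose π hπ using hproj
  -- bounded geometry data
  obtain ⟨H, hH⟩ := hbg S hS
  set Λ : ℝ := 4 * S + 2 * R with hΛ
  have hΛpos : 0 < Λ := by positivity
  obtain ⟨n, hn⟩ := hbg Λ hΛpos
  set K : ℕ := n * H + H with hK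
  set T : ℝ := 2 * S + R + R * K with hT
  have hTpos : 0 < T := by positivity
  obtain ⟨NT, hNT⟩ := hbg T hTpos
  -- finite balls in Y
  have hfinball : ∀ (p : Y) (ρ : ℝ), (Metric.closedBall (p : X) ρ).Finite →
      {q : Y | dist q p ≤ ρ}.Finite := by
    intro p ρ hf
    have heq : {q : Y | dist q p ≤ ρ} = ((↑) : Y → X) ⁻¹' (Metric.closedBall (p : X) ρ) := by
      ext q
      simp [Subtype.dist_eq, Metric.mem_closedBall]
    rw [heq]
    exact Set.Finite.preimage (Subtype.val_injective.injOn) hf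
  have hcardball : ∀ (p : Y) (ρ : ℝ) (hf : (Metric.closedBall (p : X) ρ).Finite) (N : ℕ),
      (Metric.closedBall (p : X) ρ).ncard ≤ N → ((hfinball p ρ hf).toFinset).card ≤ N := by
    intro p ρ hf N hN
    have h1 : ((hfinball p ρ hf).toFinset).card ≤ hf.toFinset.card := by
      refine Finset.card_le_card_of_injOn (fun q => (q : X)) ?_ ?_
      · intro q hq
        rw [Finset.mem_coe, Set.Finite.mem_toFinset] at hq ⊢
        simp only [Set.mem_setOf_eq, Subtype.dist_eq] at hq
        simpa [Metric.mem_closedBall] using hq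
      · exact Subtype.val_injective.injOn
    have h2 : hf.toFinset.card = (Metric.closedBall (p : X) ρ).ncard :=
      (Set.ncard_eq_toFinset_card _ hf).symm
    omega
  set pool : Y → Finset Y := fun p => (hfinball p T (hNT (p : X)).1).toFinset with hpool
  have hpool_mem : ∀ p q : Y, q ∈ pool p ↔ dist q p ≤ T := by
    intro p q; rw [hpool]; simp [Set.Finite.mem_toFinset]
  set nbr : Y → Finset Y := fun p => (hfinball p Λ (hn (p : X)).1).toFinset with hnbr
  have hnbr_mem : ∀ p q : Y, q ∈ nbr p ↔ dist q p ≤ Λ := by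
    intro p q; rw [hnbr]; simp [Set.Finite.mem_toFinset]
  have hnbr_card : ∀ p : Y, (nbr p).card ≤ n := by
    intro p; exact hcardball p Λ (hn (p : X)).1 n (hn (p : X)).2
  -- towers
  letI : LinearOrder Y := IsWellOrder.linearOrder WellOrderingRel
  obtain ⟨g, hg_sub, hg_card, hg_disj, hg_full⟩ :=
    exists_towers (β := Y) WellOrderingRel
      (IsWellFounded.wf (r := WellOrderingRel))
      (fun a b hab => by
        rcases trichotomous_of WellOrderingRel a b with h1 | h1 | h1
        · exact Or.inl h1
        · exact absurd h1 hab
        · exact Or.inr h1)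
      pool nbr
      (fun p q hq => by rw [hnbr_mem] at hq ⊢; rw [dist_comm]; exact hq)
      (fun p => by rw [hnbr_mem]; simp [hΛpos.le])
      H n (fun p => (hnbr_card p).trans (Nat.le_succ n))
  -- fiber counts
  set xi : Y → Y → ℕ := fun y p => ((A (y : X)).filter (fun a => π a = p)).card with hxi
  have hxiH : ∀ y p : Y, xi y p ≤ H := by
    intro y p
    have hsub : (A (y : X)).filter (fun a => π a = p) ⊆ (hH (p : X)).1.toFinset := by
      intro a ha
      rw [Finset.mem_filter] at ha
      rw [Set.Finite.mem_toFinset, Metric.mem_closedBall]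
      have h1 : dist a (y : X) ≤ S := by rw [dist_comm]; exact hArad _ _ ha.1
      have h2 : dist a ((π a : Y) : X) ≤ dist a (y : X) := hπ a y
      rw [ha.2] at h2
      exact h2.trans h1
    have h1 := Finset.card_le_card hsub
    have h2 : (hH (p : X)).1.toFinset.card = (Metric.closedBall ((p : Y) : X) S).ncard :=
      (Set.ncard_eq_toFinset_card _ _).symm
    have h3 := (hH (p : X)).2
    simp only [hxi]
    omega
  have hanchor : ∀ (y : Y), ∀ p ∈ (A (y : X)).image π, dist p y ≤ 2 * S := by
    intro y p hp
    rw [Finset.mem_image] at hp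
    obtain ⟨a, ha, hpa⟩ := hp
    have h1 : dist a (y : X) ≤ S := by rw [dist_comm]; exact hArad _ _ ha
    have h2 : dist a ((π a : Y) : X) ≤ dist a (y : X) := hπ a y
    rw [Subtype.dist_eq, ← hpa]
    calc dist ((π a : Y) : X) (y : X)
        ≤ dist ((π a : Y) : X) a + dist a (y : X) := dist_triangle _ _ _
      _ ≤ S + S := add_le_add (by rw [dist_comm]; exact h2.trans h1) h1
      _ = 2 * S := by ring
  -- components
  set stp : Y → Y → Prop := fun u v => dist u v ≤ R with hstp
  set Rch : Y → Set Y := fun y => {z | Relation.ReflTransGen stp y z} with hRch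
  have hRch_refl : ∀ y : Y, y ∈ Rch y := fun y => Relation.ReflTransGen.refl
  have hRe : ∀ u v : Y, dist u v ≤ R → Rch u = Rch v := by
    have hmono : ∀ u v : Y, stp u v → Rch v ⊆ Rch u := by
      intro u v huv z hz
      exact Relation.ReflTransGen.head huv hz
    intro u v huv
    have h1 : stp u v := by simp only [hstp]; exact huv
    have h2 : stp v u := by simp only [hstp]; rw [dist_comm]; exact huv
    exact Set.Subset.antisymm (hmono v u h2) (hmono u v h1)
  set Q : Y → Prop := fun y => ∃ c ∈ Rch y, ∀ z ∈ Rch y, dist c z ≤ T with hQ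
  have hfinR : ∀ y : Y, Q y → (Rch y).Finite := by
    intro y hq
    simp only [hQ] at hq
    obtain ⟨c, hc1, hc2⟩ := hq
    apply Set.Finite.subset (hfinball c T (hNT (c : X)).1)
    intro z hz
    simp only [Set.mem_setOf_eq]
    rw [dist_comm]
    exact hc2 z hz
  have hroom : ∀ y : Y, ¬ Q y → ∀ p : Y, dist p y ≤ 2 * S + R → K ≤ (pool p).card := by
    intro y hq p hp
    simp only [hQ] at hq
    push_neg at hq
    obtain ⟨z, hzR, hz⟩ := hq y (hRch_refl y)
    have hchain : ∀ (z' : Y), Relation.ReflTransGen stp y z' → ∀ t : ℝ, 0 ≤ t →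
        t < dist y z' → ∃ w : Y, t < dist y w ∧ dist y w ≤ t + R := by
      intro z' hz'
      induction hz' with
      | refl => intro t ht htlt; rw [dist_self] at htlt; linarith
      | @tail b c hab hbc ih =>
          intro t ht htlt
          by_cases hcase : t < dist y b
          · exact ih t ht hcase
          · push_neg at hcase
            refine ⟨c, htlt, ?_⟩
            have hbcR : dist b c ≤ R := by simpa [hstp] using hbc
            calc dist y c ≤ dist y b + dist b c := dist_triangle y b c
              _ ≤ t + R := add_le_add hcase hbcR
    have hw : ∀ j : ℕ, j < K → ∃ w : Y, R * j < dist y w ∧ dist y w ≤ R * j + R := by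
      intro j hj
      apply hchain z hzR (R * j) (by positivity)
      have h1 : (R : ℝ) * j < R * K := by
        apply mul_lt_mul_of_pos_left _ hR
        exact_mod_cast hj
      have h2 : R * (K : ℝ) ≤ T := by rw [hT]; linarith
      linarith
    choose w hw1 hw2 using hw
    set f : ℕ → Y := fun j => if h : j < K then w j h else y with hf
    have hmaps : ∀ j ∈ Finset.range K, f j ∈ pool p := by
      intro j hj
      rw [Finset.mem_range] at hj
      rw [hpool_mem]
      simp only [hf, dif_pos hj]
      have hj1 : (j : ℝ) + 1 ≤ (K : ℝ) := by exact_mod_cast hj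
      calc dist (w j hj) p ≤ dist (w j hj) y + dist y p := dist_triangle _ _ _
        _ ≤ (R * j + R) + (2 * S + R) := by
            refine add_le_add ?_ ?_
            · rw [dist_comm]; exact hw2 j hj
            · rw [dist_comm]; exact hp
        _ ≤ T := by rw [hT]; nlinarith [hR.le]
    have key : ∀ j j' : ℕ, j < j' → j' < K → f j ≠ f j' := by
      intro j j' hlt hj' heq
      have hj : j < K := hlt.trans hj'
      simp only [hf, dif_pos hj, dif_pos hj'] at heq
      have h1 := hw2 j hj
      have h2 := hw1 j' hj'
      rw [heq] at h1
      have hcast : (j : ℝ) + 1 ≤ (j' : ℝ) := by exact_mod_cast hlt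
      nlinarith [hR.le]
    have hinj : Set.InjOn f ↑(Finset.range K) := by
      intro j hj j' hj' heq
      simp only [Finset.coe_range, Set.mem_Iio] at hj hj'
      by_contra hne
      rcases Nat.lt_or_ge j j' with hlt | hge
      · exact key j j' hlt hj' heq
      · have hlt' : j' < j := by omega
        exact key j' j hlt' hj heq.symm
    have hcard := Finset.card_le_card_of_injOn f hmaps hinj
    rwa [Finset.card_range] at hcard
  -- the family
  set B : Y → Finset Y := fun y =>
    if h : Q y then (hfinR y h).toFinset
    else ((A (y : X)).image π).biUnion (fun p => sel (g p) (xi y p)) with hB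
  have hBne : ∀ y : Y, (B y).Nonempty := by
    intro y
    by_cases h : Q y
    · simp only [hB, dif_pos h]
      exact ⟨y, (hfinR y h).mem_toFinset.2 (hRch_refl y)⟩
    · simp only [hB, dif_neg h]
      obtain ⟨a, ha⟩ := hAne (y : X)
      have hpa : π a ∈ (A (y : X)).image π := Finset.mem_image_of_mem π ha
      have hxipos : 0 < xi y (π a) := by
        simp only [hxi]
        rw [Finset.card_pos]
        exact ⟨a, Finset.mem_filter.2 ⟨ha, rfl⟩⟩
      have hgc : (g (π a)).card = H :=
        hg_full _ (hroom y h (π a) ((hanchor y (π a) hpa).trans (by linarith)))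
      have hcard : (sel (g (π a)) (xi y (π a))).card = xi y (π a) := by
        rw [sel_card, hgc, min_eq_left (hxiH y (π a))]
      have hne2 : (sel (g (π a)) (xi y (π a))).Nonempty := by
        rw [← Finset.card_pos, hcard]; exact hxipos
      obtain ⟨q, hq⟩ := hne2
      exact ⟨q, Finset.mem_biUnion.2 ⟨π a, hpa, hq⟩⟩
  refine ⟨B, 2 * T + 2 * S + 1, by positivity, hBne, ?_, ?_⟩
  · -- pair condition
    intro y y' hdyy'
    have hXd : dist (y : X) (y' : X) ≤ R := by rw [← Subtype.dist_eq]; exact hdyy'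
    have hRe' : Rch y = Rch y' := hRe y y' hdyy'
    have hQiff : Q y ↔ Q y' := by simp only [hQ]; rw [hRe']
    by_cases hq : Q y
    · have hq' : Q y' := hQiff.mp hq
      have hBeq : B y = B y' := by
        simp only [hB, dif_pos hq, dif_pos hq']
        apply Finset.ext
        intro z
        rw [Set.Finite.mem_toFinset, Set.Finite.mem_toFinset, hRe']
      rw [hBeq, symmDiff_self, Finset.inter_self]
      simp only [Finset.bot_eq_empty, Finset.card_empty, Nat.cast_zero]
      exact mul_pos hε (by exact_mod_cast Finset.card_pos.2 (hBne y'))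
    · have hq' : ¬ Q y' := fun h => hq (hQiff.mpr h)
      -- the symmetric difference estimate (no hypotheses on u, v needed)
      have hside : ∀ u v : Y,
          ((((A (u : X)).image π).biUnion (fun p => sel (g p) (xi u p))) \
            (((A (v : X)).image π).biUnion (fun p => sel (g p) (xi v p)))).card
          ≤ ((A (u : X)) \ (A (v : X))).card := by
        intro u v
        have hsub : (((A (u : X)).image π).biUnion (fun p => sel (g p) (xi u p))) \
            (((A (v : X)).image π).biUnion (fun p => sel (g p) (xi v p))) ⊆
            ((A (u : X)).image π).biUnion
              (fun p => sel (g p) (xi u p) \ sel (g p) (xi v p)) := by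
          intro q hq0
          rw [Finset.mem_sdiff] at hq0
          obtain ⟨p, hp, hqE⟩ := Finset.mem_biUnion.1 hq0.1
          refine Finset.mem_biUnion.2 ⟨p, hp, Finset.mem_sdiff.2 ⟨hqE, fun hqE' => ?_⟩⟩
          rcases Nat.eq_zero_or_pos (xi v p) with h0 | h0
          · rw [h0, sel_zero] at hqE'
            exact absurd hqE' (Finset.notMem_empty q)
          · apply hq0.2
            refine Finset.mem_biUnion.2 ⟨p, ?_, hqE'⟩
            have h0' : ((A (v : X)).filter (fun a => π a = p)).Nonempty :=
              Finset.card_pos.1 (by simpa [hxi] using h0)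
            obtain ⟨a, ha⟩ := h0'
            rw [Finset.mem_filter] at ha
            rw [← ha.2]
            exact Finset.mem_image_of_mem π ha.1
        calc (((((A (u : X)).image π).biUnion (fun p => sel (g p) (xi u p))) \
              (((A (v : X)).image π).biUnion (fun p => sel (g p) (xi v p)))).card)
            ≤ (((A (u : X)).image π).biUnion
                (fun p => sel (g p) (xi u p) \ sel (g p) (xi v p))).card :=
              Finset.card_le_card hsub
          _ ≤ ∑ p ∈ (A (u : X)).image π, (sel (g p) (xi u p) \ sel (g p) (xi v p)).card :=
              Finset.card_biUnion_le
          _ ≤ ∑ p ∈ (A (u : X)).image π, (xi u p - xi v p) :=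
              Finset.sum_le_sum (fun p _ => card_sel_sdiff_sel _ _ _)
          _ ≤ ∑ p ∈ (A (u : X)).image π,
                (((A (u : X)) \ (A (v : X))).filter (fun a => π a = p)).card := by
              apply Finset.sum_le_sum
              intro p _
              have hsplit : (A (u : X)).filter (fun a => π a = p) ⊆
                  ((A (v : X)).filter (fun a => π a = p)) ∪
                  (((A (u : X)) \ (A (v : X))).filter (fun a => π a = p)) := by
                intro a ha
                rw [Finset.mem_filter] at ha
                by_cases hav : a ∈ A (v : X)
                · exact Finset.mem_union_left _ (Finset.mem_filter.2 ⟨hav, ha.2⟩)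
                · exact Finset.mem_union_right _
                    (Finset.mem_filter.2 ⟨Finset.mem_sdiff.2 ⟨ha.1, hav⟩, ha.2⟩)
              have h1 := (Finset.card_le_card hsplit).trans (Finset.card_union_le _ _)
              simp only [hxi]
              omega
          _ ≤ ((A (u : X)) \ (A (v : X))).card := by
              rw [← Finset.card_biUnion]
              · apply Finset.card_le_card
                intro a ha
                obtain ⟨p, _, ha2⟩ := Finset.mem_biUnion.1 ha
                exact (Finset.mem_filter.1 ha2).1
              · intro p _ p' _ hne
                rw [Function.onFun, Finset.disjoint_left]
                intro a ha1 ha2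
                exact hne (((Finset.mem_filter.1 ha1).2.symm.trans (Finset.mem_filter.1 ha2).2))
      have h1 : (symmDiff (((A (y : X)).image π).biUnion (fun p => sel (g p) (xi y p)))
            (((A (y' : X)).image π).biUnion (fun p => sel (g p) (xi y' p)))).card
          ≤ (symmDiff (A (y : X)) (A (y' : X))).card := by
        rw [card_symmDiff_finset, card_symmDiff_finset]
        exact add_le_add (hside y y') (hside y' y)
      -- the intersection estimate
      set I : Finset Y := ((A (y : X)) ∩ (A (y' : X))).image π with hI
      have hIy : I ⊆ (A (y : X)).image π := by
        rw [hI]; exact Finset.image_subset_image (Finset.inter_subset_left)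
      have hIy' : I ⊆ (A (y' : X)).image π := by
        rw [hI]; exact Finset.image_subset_image (Finset.inter_subset_right)
      have hgIcard : ∀ p ∈ I, (g p).card = H := fun p hp =>
        hg_full p (hroom y hq p ((hanchor y p (hIy hp)).trans (by linarith)))
      have hxile : ∀ p : Y, (((A (y : X)) ∩ (A (y' : X))).filter (fun a => π a = p)).card
          ≤ min (xi y p) (xi y' p) := by
        intro p
        apply le_min
        · apply Finset.card_le_card
          intro a ha
          rw [Finset.mem_filter] at ha ⊢
          exact ⟨Finset.mem_of_mem_inter_left ha.1, ha.2⟩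
        · apply Finset.card_le_card
          intro a ha
          rw [Finset.mem_filter] at ha ⊢
          exact ⟨Finset.mem_of_mem_inter_right ha.1, ha.2⟩
      have hdisjE : ∀ p ∈ I, ∀ p' ∈ I, p ≠ p' →
          Disjoint (sel (g p) (min (xi y p) (xi y' p)))
            (sel (g p') (min (xi y p') (xi y' p'))) := by
        intro p hp p' hp' hne
        have hd : dist p' p ≤ Λ := by
          have d1 : dist p y ≤ 2 * S := hanchor y p (hIy hp)
          have d2 : dist p' y ≤ 2 * S := hanchor y p' (hIy hp')
          calc dist p' p ≤ dist p' y + dist y p := dist_triangle _ _ _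
            _ ≤ 2 * S + 2 * S := add_le_add d2 (by rw [dist_comm]; exact d1)
            _ ≤ Λ := by rw [hΛ]; linarith [hR.le]
        have hdg := hg_disj p p' hne ((hnbr_mem p p').2 hd)
        exact Finset.disjoint_left.2 fun x hx hx' =>
          Finset.disjoint_left.1 hdg (sel_subset _ _ hx) (sel_subset _ _ hx')
      have hC : (I.biUnion (fun p => sel (g p) (min (xi y p) (xi y' p)))).card
          = ∑ p ∈ I, min (xi y p) (xi y' p) := by
        rw [Finset.card_biUnion hdisjE]
        apply Finset.sum_congr rfl
        intro p hp
        rw [sel_card, hgIcard p hp]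
        exact min_eq_left (le_trans (min_le_left _ _) (hxiH y p))
      have hCsub : I.biUnion (fun p => sel (g p) (min (xi y p) (xi y' p))) ⊆
          (((A (y : X)).image π).biUnion (fun p => sel (g p) (xi y p))) ∩
          (((A (y' : X)).image π).biUnion (fun p => sel (g p) (xi y' p))) := by
        intro x hx
        obtain ⟨p, hp, hxE⟩ := Finset.mem_biUnion.1 hx
        rw [Finset.mem_inter]
        exact ⟨Finset.mem_biUnion.2 ⟨p, hIy hp, sel_mono _ (min_le_left _ _) hxE⟩,
          Finset.mem_biUnion.2 ⟨p, hIy' hp, sel_mono _ (min_le_right _ _) hxE⟩⟩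
      have h2 : ((A (y : X)) ∩ (A (y' : X))).card ≤
          ((((A (y : X)).image π).biUnion (fun p => sel (g p) (xi y p))) ∩
           (((A (y' : X)).image π).biUnion (fun p => sel (g p) (xi y' p)))).card := by
        calc ((A (y : X)) ∩ (A (y' : X))).card
            = ∑ p ∈ I, (((A (y : X)) ∩ (A (y' : X))).filter (fun a => π a = p)).card := by
              rw [hI]; exact Finset.card_eq_sum_card_image π _
          _ ≤ ∑ p ∈ I, min (xi y p) (xi y' p) := Finset.sum_le_sum (fun p _ => hxile p)
          _ = (I.biUnion (fun p => sel (g p) (min (xi y p) (xi y' p)))).card := hC.symm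
          _ ≤ _ := Finset.card_le_card hCsub
      simp only [hB, dif_neg hq, dif_neg hq']
      calc ((symmDiff (((A (y : X)).image π).biUnion (fun p => sel (g p) (xi y p)))
              (((A (y' : X)).image π).biUnion (fun p => sel (g p) (xi y' p)))).card : ℝ)
          ≤ ((symmDiff (A (y : X)) (A (y' : X))).card : ℝ) := Nat.cast_le.2 h1
        _ < ε * (((A (y : X)) ∩ (A (y' : X))).card : ℝ) := hApair _ _ hXd
        _ ≤ ε * (((((A (y : X)).image π).biUnion (fun p => sel (g p) (xi y p))) ∩
              (((A (y' : X)).image π).biUnion (fun p => sel (g p) (xi y' p)))).card : ℝ) :=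
            mul_le_mul_of_nonneg_left (Nat.cast_le.2 h2) hε.le
  · -- radius condition
    intro y q hq
    by_cases h : Q y
    · simp only [hB, dif_pos h] at hq
      rw [Set.Finite.mem_toFinset] at hq
      simp only [hQ] at h
      obtain ⟨c, hc1, hc2⟩ := h
      have h1 : dist c y ≤ T := hc2 y (hRch_refl y)
      have h2 : dist c q ≤ T := hc2 q hq
      calc dist y q ≤ dist y c + dist c q := dist_triangle _ _ _
        _ ≤ T + T := add_le_add (by rw [dist_comm]; exact h1) h2
        _ ≤ 2 * T + 2 * S + 1 := by linarith [hS.le]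
    · simp only [hB, dif_neg h] at hq
      obtain ⟨p, hp, hqE⟩ := Finset.mem_biUnion.1 hq
      have h1 : dist q p ≤ T := (hpool_mem p q).1 (hg_sub p (sel_subset _ _ hqE))
      have h2 : dist p y ≤ 2 * S := hanchor y p hp
      calc dist y q ≤ dist y p + dist p q := dist_triangle _ _ _
        _ ≤ 2 * S + T := add_le_add (by rw [dist_comm]; exact h2) (by rw [dist_comm]; exact h1)
        _ ≤ 2 * T + 2 * S + 1 := by linarith [hTpos.le]
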